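/- There exists a constant C ≥ 1, depending only on f and ξ₀ (not on α), such that for every α ∈ (0, ξ₀] and every 0 ≤ n ≤ N(α): C^{−1}·|(f^n)'(c₁)|·α ≤ |I_{n+1}| ≤ C·|(f^n)'(c₁)|·α. -/

import Mathlib

open Set MeasureTheory Filter
open scoped ENNReal

noncomputable section

/-- The quadratic map `f(x) = a - x²`. -/
def qm (a : ℝ) : ℝ → ℝ := fun x => a - x ^ 2

/-- The critical point `0` of `qm a` is strictly pre-periodic: its forward orbit never
returns to `0` and is eventually periodic. -/
def StrictlyPreperiodic (a : ℝ) : Prop :=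
  (∀ i : ℕ, 1 ≤ i → (qm a)^[i] 0 ≠ 0) ∧
    ∃ m p : ℕ, 1 ≤ m ∧ 1 ≤ p ∧ (qm a)^[m + p] 0 = (qm a)^[m] 0

/-- A lift of the Viana skew product `F(θ, x) = (dθ, f(x) + αφ(θ))` to `ℝ × ℝ`;
for `φ` of period `1` this is a lift of the corresponding map of `(ℝ/ℤ) × ℝ`. -/
def Viana (a : ℝ) (d : ℕ) (φ : ℝ → ℝ) (α : ℝ) : ℝ × ℝ → ℝ × ℝ :=
  fun p => ((d : ℝ) * p.1, qm a p.2 + α * φ p.1)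

/-- The fibre maps `f_n`, defined by `F^n(θ, x) = (d^n θ, f_n(θ, x))`. -/
def fn (a : ℝ) (d : ℕ) (φ : ℝ → ℝ) (α : ℝ) (n : ℕ) (θ x : ℝ) : ℝ :=
  ((Viana a d φ α)^[n] (θ, x)).2

/-- Endpoints of the shadowing intervals: `IEnd a α n` gives the endpoints of `I_{n+1}`, where
`I₁ = [c₁ - 2α, c₁ + 2α]` and `I_{n+1}` is the closed interval containing `f(I_n)` both of whose
complementary components in `I_{n+1}` have length `α`. -/
def IEnd (a α : ℝ) : ℕ → ℝ × ℝ
  | 0 => (qm a 0 - 2 * α, qm a 0 + 2 * α)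
  | n + 1 =>
      (sInf (qm a '' Set.Icc (IEnd a α n).1 (IEnd a α n).2) - α,
        sSup (qm a '' Set.Icc (IEnd a α n).1 (IEnd a α n).2) + α)

/-- The shadowing interval `I_n`, for `n ≥ 1`. -/
def Iseq (a α : ℝ) (n : ℕ) : Set ℝ := Set.Icc (IEnd a α (n - 1)).1 (IEnd a α (n - 1)).2

/-- The length `|I_{n+1}|` of the shadowing interval `I_{n+1}`. -/
def len (a α : ℝ) (n : ℕ) : ℝ := (IEnd a α n).2 - (IEnd a α n).1

/-- `N(α)`: the maximal integer `N` such that `|I_n| < ξ₀` for all `1 ≤ n ≤ N` and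
`∑_{n=1}^{N} |I_n| ≤ ξ₀`. -/
def Nal (a ξ₀ α : ℝ) : ℕ :=
  sSup {N : ℕ | (∀ n : ℕ, 1 ≤ n → n ≤ N → len a α (n - 1) < ξ₀) ∧
    ∑ n ∈ Finset.range N, len a α n ≤ ξ₀}

open scoped ContDiff

set_option maxHeartbeats 1000000
section ShadowAux

lemma qm_contDiff (a : ℝ) : ContDiff ℝ ∞ (qm a) := by unfold qm; fun_prop

lemma iter_contDiff (a : ℝ) (n : ℕ) : ContDiff ℝ ∞ ((qm a)^[n]) := by
  induction n with
  | zero => simpa using contDiff_id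
  | succ n ih => rw [Function.iterate_succ]; exact ih.comp (qm_contDiff a)

lemma smooth_deriv {u : ℝ → ℝ} (hu : ContDiff ℝ ∞ u) : ContDiff ℝ ∞ (deriv u) :=
  (contDiff_infty_iff_deriv.mp hu).2

lemma smooth_diff {u : ℝ → ℝ} (hu : ContDiff ℝ ∞ u) : Differentiable ℝ u :=
  hu.differentiable (by simp)

lemma smooth_cont {u : ℝ → ℝ} (hu : ContDiff ℝ ∞ u) : Continuous u :=
  (smooth_diff hu).continuous

lemma deriv_qm (a : ℝ) : deriv (qm a) = fun x => -(2 * x) := by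
  funext x
  have h : HasDerivAt (qm a) (-(2 * x)) x := by
    have := ((hasDerivAt_pow 2 x).const_sub a)
    simp [pow_one] at this
    exact this
  exact h.deriv

lemma d2_qm (a : ℝ) : deriv (deriv (qm a)) = fun _ => -2 := by
  rw [deriv_qm]
  funext x
  have h : HasDerivAt (fun x : ℝ => -(2*x)) (-2) x := by
    simpa using ((hasDerivAt_id x).const_mul (2:ℝ)).fun_neg
  exact h.deriv

lemma d3_qm (a : ℝ) : deriv (deriv (deriv (qm a))) = fun _ => 0 := by
  rw [d2_qm]; funext x; exact deriv_const x (-2)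

lemma deriv_comp_qm (a : ℝ) {F : ℝ → ℝ} (hF : ContDiff ℝ ∞ F) :
    deriv (F ∘ qm a) = fun x => deriv F (qm a x) * (-(2*x)) := by
  funext x
  rw [deriv_comp x (smooth_diff hF _) (smooth_diff (qm_contDiff a) _), deriv_qm]

lemma diffat_comp_qm (a : ℝ) {G : ℝ → ℝ} (hG : ContDiff ℝ ∞ G) (x : ℝ) :
    DifferentiableAt ℝ (fun y => G (qm a y)) x := by
  exact ((smooth_diff hG) (qm a x)).comp x ((smooth_diff (qm_contDiff a)) x)

lemma deriv_comp_qm_at (a : ℝ) {G : ℝ → ℝ} (hG : ContDiff ℝ ∞ G) (x : ℝ) :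
    deriv (fun y => G (qm a y)) x = deriv G (qm a x) * (-(2*x)) := by
  have := congrFun (deriv_comp_qm a hG) x
  simpa [Function.comp_def] using this

lemma d2_comp_qm (a : ℝ) {F : ℝ → ℝ} (hF : ContDiff ℝ ∞ F) :
    deriv (deriv (F ∘ qm a)) = fun x =>
      deriv (deriv F) (qm a x) * (2*x)^2 + deriv F (qm a x) * (-2) := by
  rw [deriv_comp_qm a hF]
  funext x
  have h1 : DifferentiableAt ℝ (fun y => deriv F (qm a y)) x :=
    diffat_comp_qm a (smooth_deriv hF) x
  have h2 : DifferentiableAt ℝ (fun y : ℝ => -(2*y)) x := by fun_prop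
  rw [deriv_fun_mul h1 h2, deriv_comp_qm_at a (smooth_deriv hF) x]
  have h3 : deriv (fun y : ℝ => -(2*y)) x = -2 := by
    have : HasDerivAt (fun y : ℝ => -(2*y)) (-2) x := by
      simpa using ((hasDerivAt_id x).const_mul (2:ℝ)).fun_neg
    exact this.deriv
  rw [h3]; ring

lemma d3_comp_qm (a : ℝ) {F : ℝ → ℝ} (hF : ContDiff ℝ ∞ F) :
    deriv (deriv (deriv (F ∘ qm a))) = fun x =>
      deriv (deriv (deriv F)) (qm a x) * (-(2*x))^3
        + 3 * (deriv (deriv F) (qm a x) * (2*x) * 2)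
        + deriv F (qm a x) * 0 := by
  rw [d2_comp_qm a hF]
  funext x
  have hd2 : DifferentiableAt ℝ (fun y => deriv (deriv F) (qm a y)) x :=
    diffat_comp_qm a (smooth_deriv (smooth_deriv hF)) x
  have hd1 : DifferentiableAt ℝ (fun y => deriv F (qm a y)) x :=
    diffat_comp_qm a (smooth_deriv hF) x
  have hsq : DifferentiableAt ℝ (fun y : ℝ => (2*y)^2) x := by fun_prop
  have hder_sq : deriv (fun y : ℝ => (2*y)^2) x = 8 * x := by
    have h : HasDerivAt (fun y : ℝ => 2*y) 2 x := by
      simpa using (hasDerivAt_id x).const_mul (2:ℝ)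
    have h2 := h.pow 2
    norm_num at h2
    have : (2:ℝ) * (2 * x) * 2 = 8 * x := by ring
    rw [this] at h2
    exact h2.deriv
  rw [deriv_fun_add (hd2.fun_mul hsq) (hd1.fun_mul (differentiableAt_const _)),
      deriv_fun_mul hd2 hsq, deriv_fun_mul hd1 (differentiableAt_const _),
      deriv_comp_qm_at a (smooth_deriv (smooth_deriv hF)) x,
      deriv_comp_qm_at a (smooth_deriv hF) x, hder_sq, deriv_const]
  ring

def Schw (u : ℝ → ℝ) (x : ℝ) : ℝ :=
  deriv (deriv (deriv u)) x / deriv u x - (3/2) * (deriv (deriv u) x / deriv u x)^2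

lemma schw_comp_qm (a : ℝ) {F : ℝ → ℝ} (hF : ContDiff ℝ ∞ F) (x : ℝ) (hx : x ≠ 0)
    (hA : deriv F (qm a x) ≠ 0) :
    Schw (F ∘ qm a) x = (2*x)^2 * Schw F (qm a x) - (3/2) / x^2 := by
  unfold Schw
  rw [congrFun (deriv_comp_qm a hF) x, congrFun (d2_comp_qm a hF) x,
      congrFun (d3_comp_qm a hF) x]
  field_simp
  ring

lemma schw_qm (a : ℝ) (x : ℝ) (hx : x ≠ 0) : Schw (qm a) x = -((3/2) / x^2) := by
  unfold Schw
  rw [congrFun (deriv_qm a) x, congrFun (d2_qm a) x, congrFun (d3_qm a) x]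
  field_simp
  ring

lemma schw_iter_neg (a : ℝ) : ∀ n, 1 ≤ n → ∀ x : ℝ,
    deriv ((qm a)^[n]) x ≠ 0 → Schw ((qm a)^[n]) x < 0 := by
  intro n
  induction n with
  | zero => intro h; omega
  | succ n ih =>
    intro _ x hd
    rcases Nat.eq_or_lt_of_le (Nat.one_le_iff_ne_zero.mpr (Nat.succ_ne_zero n)) with h1 | h1
    · -- n + 1 = 1
      have hn0 : n = 0 := by omega
      subst hn0
      rw [Function.iterate_one] at hd ⊢
      have hx : x ≠ 0 := by
        intro h0; rw [congrFun (deriv_qm a) x, h0] at hd; simp at hd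
      rw [schw_qm a x hx]
      have : (0:ℝ) < (3/2) / x^2 := by positivity
      linarith
    · have hn1 : 1 ≤ n := by omega
      rw [Function.iterate_succ] at hd ⊢
      have hd' := hd
      rw [congrFun (deriv_comp_qm a (iter_contDiff a n)) x] at hd'
      have hA : deriv ((qm a)^[n]) (qm a x) ≠ 0 := fun h => hd' (by rw [h]; ring)
      have hx : x ≠ 0 := by
        intro h0; apply hd'; rw [h0]; ring
      rw [schw_comp_qm a (iter_contDiff a n) x hx hA]
      have hneg := ih hn1 (qm a x) hA
      have h1 : (2*x)^2 * Schw ((qm a)^[n]) (qm a x) < 0 :=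
        mul_neg_of_pos_of_neg (by positivity) hneg
      have h2 : (0:ℝ) < (3/2) / x^2 := by positivity
      linarith

lemma key_third_deriv (a : ℝ) {n : ℕ} (hn : 1 ≤ n) {x : ℝ}
    (h1 : 0 < deriv ((qm a)^[n]) x) (h2 : deriv (deriv ((qm a)^[n])) x = 0) :
    deriv (deriv (deriv ((qm a)^[n]))) x < 0 := by
  have hs := schw_iter_neg a n hn x (ne_of_gt h1)
  unfold Schw at hs
  rw [h2] at hs
  simp only [zero_div, ne_eq, mul_zero, zero_pow, sub_zero] at hs
  have : deriv (deriv (deriv ((qm a)^[n]))) x / deriv ((qm a)^[n]) x < 0 := by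
    simpa using hs
  rcases div_neg_iff.mp this with ⟨_, h⟩ | ⟨h, _⟩
  · linarith
  · exact h

lemma deriv_iter (a : ℝ) (n : ℕ) : ∀ x : ℝ,
    deriv ((qm a)^[n]) x = ∏ i ∈ Finset.range n, (-(2 * (qm a)^[i] x)) := by
  induction n with
  | zero => simp
  | succ n ih =>
    intro x
    rw [Function.iterate_succ, congrFun (deriv_comp_qm a (iter_contDiff a n)) x, ih (qm a x)]
    have h : ∀ i, (qm a)^[i] (qm a x) = (qm a)^[i+1] x := by
      intro i; rw [← Function.iterate_succ_apply]
    rw [Finset.prod_range_succ']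
    simp only [h, Function.iterate_zero, id]

lemma sign_first_neg {h : ℝ → ℝ} (hsm : ContDiff ℝ ∞ h) {q : ℝ} (hq : deriv h q < 0) :
    ∃ δ > 0, (∀ x, q < x → x ≤ q + δ → h x < h q) ∧ (∀ x, q - δ ≤ x → x < q → h q < h x) := by
  have hcont : Continuous (deriv h) := smooth_cont (smooth_deriv hsm)
  have hopen : IsOpen ((deriv h) ⁻¹' (Iio 0)) := (isOpen_Iio).preimage hcont
  have hmem : q ∈ (deriv h) ⁻¹' (Iio 0) := hq
  rcases Metric.isOpen_iff.mp hopen q hmem with ⟨ε, hε, hball⟩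
  refine ⟨ε/2, by positivity, ?_, ?_⟩
  all_goals
    have hsub : Icc (q - ε/2) (q + ε/2) ⊆ (deriv h) ⁻¹' (Iio 0) := by
      intro y hy
      apply hball
      rw [Metric.mem_ball, Real.dist_eq]
      rw [mem_Icc] at hy
      rw [abs_lt]; constructor <;> linarith
    have hanti : StrictAntiOn h (Icc (q - ε/2) (q + ε/2)) := by
      apply strictAntiOn_of_deriv_neg (convex_Icc _ _) ((smooth_cont hsm).continuousOn)
      intro y hy
      rw [interior_Icc] at hy
      exact hsub (Ioo_subset_Icc_self hy)
  · intro x hx1 hx2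
    have h1 : q ∈ Icc (q - ε/2) (q + ε/2) := by constructor <;> simp <;> linarith
    have h2 : x ∈ Icc (q - ε/2) (q + ε/2) := by constructor <;> linarith
    exact hanti h1 h2 hx1
  · intro x hx1 hx2
    have h1 : q ∈ Icc (q - ε/2) (q + ε/2) := by constructor <;> simp <;> linarith
    have h2 : x ∈ Icc (q - ε/2) (q + ε/2) := by constructor <;> linarith
    exact hanti h2 h1 hx2

lemma sign_first_pos {h : ℝ → ℝ} (hsm : ContDiff ℝ ∞ h) {q : ℝ} (hq : 0 < deriv h q) :
    ∃ δ > 0, (∀ x, q < x → x ≤ q + δ → h q < h x) ∧ (∀ x, q - δ ≤ x → x < q → h x < h q) := by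
  have hneg : deriv (fun x => -(h x)) q < 0 := by
    rw [deriv.fun_neg]; linarith
  rcases sign_first_neg (hsm.neg) hneg with ⟨δ, hδ, hr, hl⟩
  exact ⟨δ, hδ, fun x h1 h2 => by have := hr x h1 h2; simpa using this,
         fun x h1 h2 => by have := hl x h1 h2; simpa using this⟩

/-- Strict local max from second derivative test. -/
lemma sign_second_max {u : ℝ → ℝ} (hsm : ContDiff ℝ ∞ u) {q : ℝ}
    (h1 : deriv u q = 0) (h2 : deriv (deriv u) q < 0) :
    ∃ δ > 0, (∀ x, q < x → x ≤ q + δ → u x < u q) ∧ (∀ x, q - δ ≤ x → x < q → u x < u q) := by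
  rcases sign_first_neg (smooth_deriv hsm) h2 with ⟨δ, hδ, hr, hl⟩
  rw [h1] at hr hl
  refine ⟨δ, hδ, ?_, ?_⟩
  · intro x hx1 hx2
    have hanti : StrictAntiOn u (Icc q (q + δ)) := by
      apply strictAntiOn_of_deriv_neg (convex_Icc _ _) ((smooth_cont hsm).continuousOn)
      intro y hy
      rw [interior_Icc] at hy
      exact hr y hy.1 (le_of_lt hy.2)
    exact hanti ⟨le_refl q, by linarith⟩ ⟨by linarith, hx2⟩ hx1
  · intro x hx1 hx2
    have hmono : StrictMonoOn u (Icc (q - δ) q) := by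
      apply strictMonoOn_of_deriv_pos (convex_Icc _ _) ((smooth_cont hsm).continuousOn)
      intro y hy
      rw [interior_Icc] at hy
      exact hl y (le_of_lt hy.1) hy.2
    exact hmono ⟨hx1, le_of_lt hx2⟩ ⟨by linarith, le_refl q⟩ hx2

/-- Strictly decreasing through q from third derivative, when first two vanish. -/
lemma sign_third_decr {u : ℝ → ℝ} (hsm : ContDiff ℝ ∞ u) {q : ℝ}
    (h1 : deriv u q = 0) (h2 : deriv (deriv u) q = 0)
    (h3 : deriv (deriv (deriv u)) q < 0) :
    ∃ δ > 0, (∀ x, q < x → x ≤ q + δ → u x < u q) ∧ (∀ x, q - δ ≤ x → x < q → u q < u x) := by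
  rcases sign_second_max (smooth_deriv hsm) h2 h3 with ⟨δ, hδ, hr, hl⟩
  rw [h1] at hr hl
  have hanti1 : StrictAntiOn u (Icc q (q + δ)) := by
    apply strictAntiOn_of_deriv_neg (convex_Icc _ _) ((smooth_cont hsm).continuousOn)
    intro y hy
    rw [interior_Icc] at hy
    exact hr y hy.1 (le_of_lt hy.2)
  have hanti2 : StrictAntiOn u (Icc (q - δ) q) := by
    apply strictAntiOn_of_deriv_neg (convex_Icc _ _) ((smooth_cont hsm).continuousOn)
    intro y hy
    rw [interior_Icc] at hy
    exact hl y (le_of_lt hy.1) hy.2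
  refine ⟨δ, hδ, ?_, ?_⟩
  · intro x hx1 hx2
    exact hanti1 ⟨le_refl q, by linarith⟩ ⟨by linarith, hx2⟩ hx1
  · intro x hx1 hx2
    exact hanti2 ⟨hx1, le_of_lt hx2⟩ ⟨by linarith, le_refl q⟩ hx2

lemma sign_second_min {u : ℝ → ℝ} (hsm : ContDiff ℝ ∞ u) {q : ℝ}
    (h1 : deriv u q = 0) (h2 : 0 < deriv (deriv u) q) :
    ∃ δ > 0, (∀ x, q < x → x ≤ q + δ → u q < u x) ∧ (∀ x, q - δ ≤ x → x < q → u q < u x) := by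
  have hneg : ContDiff ℝ ∞ (fun x => -(u x)) := hsm.neg
  have hfun : deriv (fun x => -(u x)) = fun x => -(deriv u x) := funext fun x => deriv.neg
  have hd1 : deriv (fun x => -(u x)) q = 0 := by rw [hfun]; simp [h1]
  have hd2 : deriv (deriv (fun x => -(u x))) q < 0 := by
    rw [hfun]
    have : deriv (fun x => -(deriv u x)) q = -(deriv (deriv u) q) := deriv.neg
    rw [this]
    linarith
  obtain ⟨δ, hδ, hr, hl⟩ := sign_second_max hneg hd1 hd2
  exact ⟨δ, hδ, fun x ha hb => by have := hr x ha hb; simpa using this,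
    fun x ha hb => by have := hl x ha hb; simpa using this⟩

/-- Construction of the maximal right trap interval. -/
lemma trap_right {g : ℝ → ℝ} (hg : Continuous g) {q δ z : ℝ} (hδ : 0 < δ)
    (hat : ∀ x, q < x → x ≤ q + δ → q < g x ∧ g x < x)
    (hzq : q < z) (hz : ¬(q < g z ∧ g z < z)) :
    ∃ V, q < V ∧ (∀ x, q < x → x < V → q < g x ∧ g x < x) ∧ (g V = V ∨ g V = q) := by
  set A := {t : ℝ | q < t ∧ ∀ x, q < x → x ≤ t → q < g x ∧ g x < x} with hA
  have hmem : q + δ ∈ A := ⟨by linarith, fun x h1 h2 => hat x h1 h2⟩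
  have hne : A.Nonempty := ⟨q + δ, hmem⟩
  have hub : ∀ t ∈ A, t ≤ z := by
    intro t ht
    by_contra hlt
    push_neg at hlt
    exact hz (ht.2 z hzq (le_of_lt hlt))
  have hbdd : BddAbove A := ⟨z, fun t ht => hub t ht⟩
  set V := sSup A with hV
  have hqV : q < V := lt_of_lt_of_le (by linarith : q < q + δ) (le_csSup hbdd hmem)
  have htrap : ∀ x, q < x → x < V → q < g x ∧ g x < x := by
    intro x hx1 hx2
    rcases exists_lt_of_lt_csSup hne hx2 with ⟨t, htA, hxt⟩
    exact htA.2 x hx1 (le_of_lt hxt)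
  refine ⟨V, hqV, htrap, ?_⟩
  -- g V ∈ [q, V]
  have hgVq : q ≤ g V := by
    by_contra hcon
    push_neg at hcon
    have hopen : IsOpen (g ⁻¹' (Iio q)) := isOpen_Iio.preimage hg
    rcases Metric.isOpen_iff.mp hopen V hcon with ⟨ε, hε, hball⟩
    set x := max (V - ε/2) ((q + V)/2) with hx
    have hx1 : q < x := lt_of_lt_of_le (by linarith) (le_max_right _ _)
    have hx2 : x < V := max_lt (by linarith) (by linarith)
    have hxball : x ∈ Metric.ball V ε := by
      rw [Metric.mem_ball, Real.dist_eq, abs_lt]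
      constructor
      · have := le_max_left (V - ε/2) ((q + V)/2); linarith
      · linarith
    have := hball hxball
    rw [mem_preimage, mem_Iio] at this
    exact absurd (htrap x hx1 hx2).1 (not_lt.mpr (le_of_lt this))
  have hgVV : g V ≤ V := by
    by_contra hcon
    push_neg at hcon
    have hopen : IsOpen (g ⁻¹' (Ioi V)) := isOpen_Ioi.preimage hg
    rcases Metric.isOpen_iff.mp hopen V hcon with ⟨ε, hε, hball⟩
    set x := max (V - ε/2) ((q + V)/2) with hx
    have hx1 : q < x := lt_of_lt_of_le (by linarith) (le_max_right _ _)
    have hx2 : x < V := max_lt (by linarith) (by linarith)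
    have hxball : x ∈ Metric.ball V ε := by
      rw [Metric.mem_ball, Real.dist_eq, abs_lt]
      constructor
      · have := le_max_left (V - ε/2) ((q + V)/2); linarith
      · linarith
    have hgx := hball hxball
    rw [mem_preimage, mem_Ioi] at hgx
    have := (htrap x hx1 hx2).2
    linarith
  rcases eq_or_lt_of_le hgVq with heq | hgt
  · exact Or.inr heq.symm
  rcases eq_or_lt_of_le hgVV with heq | hlt
  · exact Or.inl heq
  -- q < g V < V : extend beyond V, contradiction with sSup
  exfalso
  have hopen : IsOpen (g ⁻¹' (Ioo q V)) := isOpen_Ioo.preimage hg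
  have hmemV : V ∈ g ⁻¹' (Ioo q V) := ⟨hgt, hlt⟩
  rcases Metric.isOpen_iff.mp hopen V hmemV with ⟨ε, hε, hball⟩
  have hVA : V + ε/2 ∈ A := by
    constructor
    · linarith
    · intro x hx1 hx2
      rcases lt_or_ge x V with hxV | hxV
      · exact htrap x hx1 hxV
      · have hxball : x ∈ Metric.ball V ε := by
          rw [Metric.mem_ball, Real.dist_eq, abs_lt]
          constructor <;> linarith
        have hgx := hball hxball
        rw [mem_preimage, mem_Ioo] at hgx
        exact ⟨hgx.1, lt_of_lt_of_le hgx.2 hxV⟩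
  have := le_csSup hbdd hVA
  rw [← hV] at this
  linarith

/-- Construction of the maximal left trap interval. -/
lemma trap_left {g : ℝ → ℝ} (hg : Continuous g) {q δ z : ℝ} (hδ : 0 < δ)
    (hat : ∀ x, q - δ ≤ x → x < q → x < g x ∧ g x < q)
    (hzq : z < q) (hz : ¬(z < g z ∧ g z < q)) :
    ∃ U, U < q ∧ (∀ x, U < x → x < q → x < g x ∧ g x < q) ∧ (g U = U ∨ g U = q) := by
  -- conjugate by negation
  set g' : ℝ → ℝ := fun x => -(g (-x)) with hg'
  have hg'c : Continuous g' := (hg.comp continuous_neg).neg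
  have hat' : ∀ x, -q < x → x ≤ -q + δ → -q < g' x ∧ g' x < x := by
    intro x h1 h2
    have := hat (-x) (by linarith) (by linarith)
    constructor <;> simp [hg'] <;> [skip; skip] <;> linarith [this.1, this.2]
  have hz' : ¬(-q < g' (-z) ∧ g' (-z) < -z) := by
    simp only [hg', neg_neg]
    intro ⟨h1, h2⟩
    exact hz ⟨by linarith, by linarith⟩
  rcases trap_right hg'c hδ hat' (by linarith : -q < -z) hz' with ⟨V, hqV, htrap, hend⟩
  refine ⟨-V, by linarith, ?_, ?_⟩
  · intro x hx1 hx2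
    have := htrap (-x) (by linarith) (by linarith)
    simp only [hg', neg_neg] at this
    constructor <;> linarith [this.1, this.2]
  · rcases hend with h | h <;> simp only [hg', neg_neg] at h
    · left; linarith
    · right; linarith

/-- Periodicity of the critical orbit beyond `m`. -/
lemma qm_per (a : ℝ) {m p : ℕ} (hper : (qm a)^[m + p] 0 = (qm a)^[m] 0) :
    ∀ k, m ≤ k → (qm a)^[k + p] 0 = (qm a)^[k] 0 := by
  intro k hk
  obtain ⟨j, rfl⟩ := Nat.exists_eq_add_of_le hk
  have h1 : m + j + p = j + (m + p) := by omega
  have h2 : m + j = j + m := by omega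
  rw [h1, Function.iterate_add_apply, hper, ← Function.iterate_add_apply, ← h2]

lemma qm_per2 (a : ℝ) {m p : ℕ} (hper : (qm a)^[m + p] 0 = (qm a)^[m] 0) :
    ∀ k, m ≤ k → (qm a)^[k + 2 * p] 0 = (qm a)^[k] 0 := by
  intro k hk
  have h1 : k + 2 * p = (k + p) + p := by omega
  rw [h1, qm_per a hper (k + p) (by omega), qm_per a hper k hk]

/-- Range of the critical orbit: `c k ∈ [a - a², a]` for `k ≥ 1`. -/
lemma crange (a : ℝ) (ha1 : 1 < a) (ha2 : a < 2) :
    ∀ k, 1 ≤ k → a - a ^ 2 ≤ (qm a)^[k] 0 ∧ (qm a)^[k] 0 ≤ a := by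
  intro k hk
  induction k with
  | zero => omega
  | succ k ih =>
    rcases Nat.eq_or_lt_of_le hk with h1 | h1
    · have : k = 0 := by omega
      subst this
      simp [qm]
      nlinarith
    · have hk1 : 1 ≤ k := by omega
      obtain ⟨hlo, hhi⟩ := ih hk1
      rw [Function.iterate_succ_apply']
      set y := (qm a)^[k] 0
      have hay : (0:ℝ) ≤ a + y := by nlinarith
      have hy2 : y ^ 2 ≤ a ^ 2 := by nlinarith [mul_nonneg (by linarith : (0:ℝ) ≤ a - y) hay]
      constructor
      · simp only [qm]; nlinarith
      · simp only [qm]; nlinarith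

/-- Escape to the left for `x = 2`. -/
lemma esc_two (a : ℝ) (ha2 : a < 2) : ∀ k, 1 ≤ k → (qm a)^[k] 2 ≤ -2 := by
  intro k hk
  induction k with
  | zero => omega
  | succ k ih =>
    rcases Nat.eq_or_lt_of_le hk with h1 | h1
    · have : k = 0 := by omega
      subst this
      simp [qm]; nlinarith
    · have hk1 : 1 ≤ k := by omega
      have := ih hk1
      rw [Function.iterate_succ_apply']
      set y := (qm a)^[k] 2
      simp only [qm]; nlinarith

/-- The point `-3` never escapes `(-∞, -3]`. -/
lemma esc_m3 (a : ℝ) (ha2 : a < 2) : ∀ k, (qm a)^[k] (-3) ≤ -3 := by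
  intro k
  induction k with
  | zero => norm_num
  | succ k ih =>
    rw [Function.iterate_succ_apply']
    set y := (qm a)^[k] (-3)
    simp only [qm]; nlinarith

/-- No critical point of `(qm a)^[2p]` can lie in a forward-invariant fixed-point-free set. -/
lemma no_crit (a : ℝ) {m p : ℕ} (hm : 1 ≤ m) (hp : 1 ≤ p)
    (hper : (qm a)^[m + p] 0 = (qm a)^[m] 0)
    (S : Set ℝ)
    (hS : ∀ x ∈ S, (qm a)^[2 * p] x ∈ S ∧ (qm a)^[2 * p] x ≠ x)
    {x₀ : ℝ} (hx₀ : x₀ ∈ S) (hcrit : deriv ((qm a)^[2 * p]) x₀ = 0) : False := by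
  rw [deriv_iter] at hcrit
  rcases Finset.prod_eq_zero_iff.mp hcrit with ⟨i, hiP, hi0⟩
  rw [Finset.mem_range] at hiP
  have hfi : (qm a)^[i] x₀ = 0 := by
    have : (2 : ℝ) * (qm a)^[i] x₀ = 0 := by linarith [neg_eq_zero.mp hi0]
    linarith
  -- the orbit of x₀ shadows the critical orbit after i steps
  have horb : ∀ k, (qm a)^[k + i] x₀ = (qm a)^[k] 0 := by
    intro k
    rw [Function.iterate_add_apply, hfi]
  set n₁ := i + m with hn₁
  have hk₀ : i ≤ 2 * p * n₁ := by
    have : n₁ ≤ 2 * p * n₁ := Nat.le_mul_of_pos_left _ (by omega)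
    omega
  set k₀ := 2 * p * n₁ - i with hk₀def
  have hk₀m : m ≤ k₀ := by
    have h1 : 2 * p * n₁ ≥ 2 * n₁ := by
      apply Nat.mul_le_mul_right
      omega
    omega
  set w := (qm a)^[k₀] 0 with hw
  have hit : ((qm a)^[2 * p])^[n₁] x₀ = w := by
    rw [← Function.iterate_mul]
    have : 2 * p * n₁ = k₀ + i := by omega
    rw [this, horb]
  have hfix : (qm a)^[2 * p] w = w := by
    rw [hw, ← Function.iterate_add_apply, Nat.add_comm]
    exact qm_per2 a hper k₀ hk₀m
  have hinv : ∀ n, ((qm a)^[2 * p])^[n] x₀ ∈ S := by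
    intro n
    induction n with
    | zero => simpa using hx₀
    | succ n ih =>
      rw [Function.iterate_succ_apply']
      exact (hS _ ih).1
  have hwS : w ∈ S := hit ▸ hinv n₁
  exact (hS w hwS).2 hfix

lemma min_interior_contra (a : ℝ) {p : ℕ} (hp : 1 ≤ p) {s t x₀ : ℝ}
    (hx₀ : x₀ ∈ Ioo s t)
    (hgpos : 0 < deriv ((qm a)^[2 * p]) x₀)
    (hmin : IsMinOn (deriv ((qm a)^[2 * p])) (Icc s t) x₀) : False := by
  set g := (qm a)^[2 * p] with hg
  have hsm : ContDiff ℝ ∞ g := iter_contDiff a (2 * p)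
  have hloc : IsLocalMin (deriv g) x₀ := hmin.isLocalMin (Icc_mem_nhds hx₀.1 hx₀.2)
  have h2 : deriv (deriv g) x₀ = 0 := hloc.deriv_eq_zero
  have h3 : deriv (deriv (deriv g)) x₀ < 0 := key_third_deriv a (by omega) hgpos h2
  obtain ⟨δ, hδ, hr, -⟩ := sign_first_neg (smooth_deriv (smooth_deriv hsm)) h3
  set t' := min (x₀ + δ) t with ht'
  have hx₀t' : x₀ < t' := lt_min (by linarith) hx₀.2
  have hanti : StrictAntiOn (deriv g) (Icc x₀ t') := by
    apply strictAntiOn_of_deriv_neg (convex_Icc _ _)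
      ((smooth_cont (smooth_deriv hsm)).continuousOn)
    intro y hy
    rw [interior_Icc] at hy
    have := hr y hy.1 (le_trans (le_of_lt hy.2) (min_le_left _ _))
    rw [h2] at this
    exact this
  have hlt : deriv g t' < deriv g x₀ :=
    hanti ⟨le_refl _, le_of_lt hx₀t'⟩ ⟨le_of_lt hx₀t', le_refl _⟩ hx₀t'
  have hmem : t' ∈ Icc s t := ⟨le_trans (le_of_lt hx₀.1) (le_of_lt hx₀t'), min_le_right _ _⟩
  exact absurd (isMinOn_iff.mp hmin t' hmem) (not_le.mpr hlt)

lemma deriv_pos_on_of_nocrit {g : ℝ → ℝ} (hdcont : Continuous (deriv g)) {s t q : ℝ}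
    (hq : q ∈ Icc s t) (hqpos : 0 < deriv g q)
    (hnc : ∀ x ∈ Icc s t, x ≠ q → deriv g x ≠ 0) :
    ∀ x ∈ Icc s t, 0 < deriv g x := by
  intro x hx
  by_contra hcon
  push_neg at hcon
  have hxq : x ≠ q := fun h => by rw [h] at hcon; linarith
  have h0 : (0:ℝ) ∈ uIcc (deriv g x) (deriv g q) := by
    rw [mem_uIcc]
    left; exact ⟨hcon, le_of_lt hqpos⟩
  obtain ⟨y, hy, hy0⟩ := intermediate_value_uIcc (hdcont.continuousOn) h0
  have hymem : y ∈ Icc s t := by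
    have := uIcc_subset_Icc hx hq  -- hope this exists
    exact this hy
  have hyq : y ≠ q := by
    intro h
    rw [h] at hy0
    rw [hy0] at hqpos
    exact lt_irrefl _ hqpos
  exact hnc y hymem hyq hy0

lemma core_contra (a : ℝ) {p : ℕ} (hp : 1 ≤ p) {s t : ℝ} (hst : s < t)
    (hds : deriv ((qm a)^[2 * p]) s = 1) (hdt : deriv ((qm a)^[2 * p]) t = 1)
    (hgpos : ∀ x ∈ Icc s t, 0 < deriv ((qm a)^[2 * p]) x)
    (hlow : ∃ x₁ ∈ Icc s t, deriv ((qm a)^[2 * p]) x₁ < 1) : False := by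
  set g := (qm a)^[2 * p] with hg
  have hsm : ContDiff ℝ ∞ g := iter_contDiff a (2 * p)
  obtain ⟨x₁, hx₁, hx₁lt⟩ := hlow
  obtain ⟨x₀, hx₀, hmin⟩ := isCompact_Icc.exists_isMinOn (nonempty_Icc.mpr (le_of_lt hst))
    ((smooth_cont (smooth_deriv hsm)).continuousOn)
  have h0 : deriv g x₀ ≤ deriv g x₁ := isMinOn_iff.mp hmin x₁ hx₁
  have h1 : deriv g x₀ < 1 := lt_of_le_of_lt h0 hx₁lt
  have hxs : x₀ ≠ s := fun h => by rw [h, hds] at h1; exact lt_irrefl _ h1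
  have hxt : x₀ ≠ t := fun h => by rw [h, hdt] at h1; exact lt_irrefl _ h1
  have hint : x₀ ∈ Ioo s t :=
    ⟨lt_of_le_of_ne hx₀.1 (Ne.symm hxs), lt_of_le_of_ne hx₀.2 hxt⟩
  exact min_interior_contra a hp hint (hgpos x₀ hx₀) hmin

lemma deriv_sub_id (g : ℝ → ℝ) (hg : ContDiff ℝ ∞ g) :
    deriv (fun x => g x - x) = fun x => deriv g x - 1 := by
  funext x
  rw [deriv_fun_sub (smooth_diff hg x) differentiableAt_fun_id]
  simp

lemma finish_right (a : ℝ) {p : ℕ} (hp : 1 ≤ p) {q V : ℝ} (hqV : q < V)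
    (trapR : ∀ x, q < x → x < V → q < (qm a)^[2 * p] x ∧ (qm a)^[2 * p] x < x)
    (hgq : (qm a)^[2 * p] q = q) (hgV : (qm a)^[2 * p] V = V)
    (hdq : deriv ((qm a)^[2 * p]) q = 1)
    (hnc : ∀ x, q < x → x < V → deriv ((qm a)^[2 * p]) x ≠ 0) : False := by
  set g := (qm a)^[2 * p] with hg
  have hsm : ContDiff ℝ ∞ g := iter_contDiff a (2 * p)
  -- MVT on [q, V]
  obtain ⟨ζ, hζ, hζd⟩ := exists_hasDerivAt_eq_slope g (deriv g) hqV
    ((smooth_cont hsm).continuousOn) (fun x _ => (smooth_diff hsm x).hasDerivAt)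
  rw [hgq, hgV] at hζd
  have hζd1 : deriv g ζ = 1 := by
    rw [hζd, div_self (ne_of_gt (by linarith : (0:ℝ) < V - q))]
  have hgpos : ∀ x ∈ Icc q ζ, 0 < deriv g x := by
    apply deriv_pos_on_of_nocrit (smooth_cont (smooth_deriv hsm))
      (⟨le_refl q, le_of_lt hζ.1⟩ : q ∈ Icc q ζ) (by rw [hdq]; norm_num)
    intro x hx hxq
    exact hnc x (lt_of_le_of_ne hx.1 (Ne.symm hxq)) (lt_of_le_of_lt hx.2 hζ.2)
  by_cases hall : ∀ x ∈ Icc q ζ, 1 ≤ deriv g x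
  · -- g - id is monotone on [q, ζ], contradicting the trap
    have hmono : MonotoneOn (fun x => g x - x) (Icc q ζ) := by
      apply monotoneOn_of_deriv_nonneg (convex_Icc _ _)
        (((smooth_cont hsm).sub continuous_id').continuousOn)
      · intro x hx
        exact ((smooth_diff hsm x).sub differentiableAt_id).differentiableWithinAt
      · intro x hx
        rw [interior_Icc] at hx
        show 0 ≤ deriv (fun x => g x - x) x
        rw [deriv_sub_id g hsm]
        have := hall x (Ioo_subset_Icc_self hx)
        simp only []
        linarith
    set mid := (q + ζ)/2 with hmid
    have hmid1 : q < mid := by simp [hmid]; linarith [hζ.1]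
    have hmid2 : mid < ζ := by simp [hmid]; linarith [hζ.1]
    have h1 : (fun x => g x - x) q ≤ (fun x => g x - x) mid :=
      hmono ⟨le_refl _, le_of_lt hζ.1⟩ ⟨le_of_lt hmid1, le_of_lt hmid2⟩ (le_of_lt hmid1)
    simp only [hgq, sub_self] at h1
    have h2 := (trapR mid hmid1 (lt_trans hmid2 hζ.2)).2
    simp at h1
    linarith
  · push_neg at hall
    obtain ⟨x₁, hx₁, hx₁lt⟩ := hall
    exact core_contra a hp hζ.1 hdq hζd1 hgpos ⟨x₁, hx₁, hx₁lt⟩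

lemma finish_left (a : ℝ) {p : ℕ} (hp : 1 ≤ p) {U q : ℝ} (hUq : U < q)
    (trapL : ∀ x, U < x → x < q → x < (qm a)^[2 * p] x ∧ (qm a)^[2 * p] x < q)
    (hgq : (qm a)^[2 * p] q = q) (hgU : (qm a)^[2 * p] U = U)
    (hdq : deriv ((qm a)^[2 * p]) q = 1)
    (hnc : ∀ x, U < x → x < q → deriv ((qm a)^[2 * p]) x ≠ 0) : False := by
  set g := (qm a)^[2 * p] with hg
  have hsm : ContDiff ℝ ∞ g := iter_contDiff a (2 * p)
  obtain ⟨ζ, hζ, hζd⟩ := exists_hasDerivAt_eq_slope g (deriv g) hUq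
    ((smooth_cont hsm).continuousOn) (fun x _ => (smooth_diff hsm x).hasDerivAt)
  rw [hgq, hgU] at hζd
  have hζd1 : deriv g ζ = 1 := by
    rw [hζd, div_self (ne_of_gt (by linarith : (0:ℝ) < q - U))]
  have hgpos : ∀ x ∈ Icc ζ q, 0 < deriv g x := by
    apply deriv_pos_on_of_nocrit (smooth_cont (smooth_deriv hsm))
      (⟨le_of_lt hζ.2, le_refl q⟩ : q ∈ Icc ζ q) (by rw [hdq]; norm_num)
    intro x hx hxq
    exact hnc x (lt_of_lt_of_le hζ.1 hx.1) (lt_of_le_of_ne hx.2 hxq)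
  by_cases hall : ∀ x ∈ Icc ζ q, 1 ≤ deriv g x
  · have hmono : MonotoneOn (fun x => g x - x) (Icc ζ q) := by
      apply monotoneOn_of_deriv_nonneg (convex_Icc _ _)
        (((smooth_cont hsm).sub continuous_id').continuousOn)
      · intro x hx
        exact ((smooth_diff hsm x).sub differentiableAt_id).differentiableWithinAt
      · intro x hx
        rw [interior_Icc] at hx
        show 0 ≤ deriv (fun x => g x - x) x
        rw [deriv_sub_id g hsm]
        have := hall x (Ioo_subset_Icc_self hx)
        simp only []
        linarith
    set mid := (ζ + q)/2 with hmid
    have hmid1 : ζ < mid := by simp [hmid]; linarith [hζ.2]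
    have hmid2 : mid < q := by simp [hmid]; linarith [hζ.2]
    have h1 : (fun x => g x - x) mid ≤ (fun x => g x - x) q :=
      hmono ⟨le_of_lt hmid1, le_of_lt hmid2⟩ ⟨le_of_lt hζ.2, le_refl _⟩ (le_of_lt hmid2)
    simp only [hgq, sub_self] at h1
    have h2 := (trapL mid (lt_trans hζ.1 hmid1) hmid2).1
    simp at h1
    linarith
  · push_neg at hall
    obtain ⟨x₁, hx₁, hx₁lt⟩ := hall
    exact core_contra a hp hζ.2 hζd1 hdq hgpos ⟨x₁, hx₁, hx₁lt⟩

lemma finish_two (a : ℝ) {p : ℕ} (hp : 1 ≤ p) {U q V : ℝ} (hUq : U < q) (hqV : q < V)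
    (hgU : (qm a)^[2 * p] U = U) (hgq : (qm a)^[2 * p] q = q) (hgV : (qm a)^[2 * p] V = V)
    (hdq_lt : deriv ((qm a)^[2 * p]) q < 1) (hdq_pos : 0 < deriv ((qm a)^[2 * p]) q)
    (hnc : ∀ x, (U < x ∧ x < q) ∨ (q < x ∧ x < V) → deriv ((qm a)^[2 * p]) x ≠ 0) :
    False := by
  set g := (qm a)^[2 * p] with hg
  have hsm : ContDiff ℝ ∞ g := iter_contDiff a (2 * p)
  obtain ⟨ζ₁, hζ₁, hζ₁d⟩ := exists_hasDerivAt_eq_slope g (deriv g) hUq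
    ((smooth_cont hsm).continuousOn) (fun x _ => (smooth_diff hsm x).hasDerivAt)
  rw [hgq, hgU] at hζ₁d
  have hζ₁d1 : deriv g ζ₁ = 1 := by
    rw [hζ₁d, div_self (ne_of_gt (by linarith : (0:ℝ) < q - U))]
  obtain ⟨ζ₂, hζ₂, hζ₂d⟩ := exists_hasDerivAt_eq_slope g (deriv g) hqV
    ((smooth_cont hsm).continuousOn) (fun x _ => (smooth_diff hsm x).hasDerivAt)
  rw [hgq, hgV] at hζ₂d
  have hζ₂d1 : deriv g ζ₂ = 1 := by
    rw [hζ₂d, div_self (ne_of_gt (by linarith : (0:ℝ) < V - q))]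
  have hζ₁ζ₂ : ζ₁ < ζ₂ := lt_trans hζ₁.2 hζ₂.1
  have hqmem : q ∈ Icc ζ₁ ζ₂ := ⟨le_of_lt hζ₁.2, le_of_lt hζ₂.1⟩
  have hgpos : ∀ x ∈ Icc ζ₁ ζ₂, 0 < deriv g x := by
    apply deriv_pos_on_of_nocrit (smooth_cont (smooth_deriv hsm)) hqmem hdq_pos
    intro x hx hxq
    apply hnc
    rcases lt_or_gt_of_ne hxq with h | h
    · left; exact ⟨lt_of_lt_of_le hζ₁.1 hx.1, h⟩
    · right; exact ⟨h, lt_of_le_of_lt hx.2 hζ₂.2⟩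
  exact core_contra a hp hζ₁ζ₂ hζ₁d1 hζ₂d1 hgpos ⟨q, hqmem, hdq_lt⟩

theorem cycle_repelling (a : ℝ) (ha1 : 1 < a) (ha2 : a < 2)
    (hne : ∀ i, 1 ≤ i → (qm a)^[i] 0 ≠ 0)
    {m p : ℕ} (hm : 1 ≤ m) (hp : 1 ≤ p)
    (hper : (qm a)^[m + p] 0 = (qm a)^[m] 0) :
    1 < ∏ k ∈ Finset.range p, (2 * |(qm a)^[m + k] 0|) := by
  by_contra hcon
  push_neg at hcon
  set g := (qm a)^[2 * p] with hgdef
  set q := (qm a)^[m] 0 with hqdef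
  have hsm : ContDiff ℝ ∞ g := iter_contDiff a (2 * p)
  have hgc : Continuous g := smooth_cont hsm
  -- q is a fixed point of g
  have hgq : g q = q := by
    rw [hgdef, hqdef, ← Function.iterate_add_apply, Nat.add_comm]
    exact qm_per2 a hper m (le_refl m)
  -- iterates of q
  have horbq : ∀ i, (qm a)^[i] q = (qm a)^[m + i] 0 := by
    intro i
    rw [hqdef, ← Function.iterate_add_apply, Nat.add_comm]
  -- derivative at q is the square of the multiplier
  set lam := ∏ k ∈ Finset.range p, (-(2 * (qm a)^[m + k] 0)) with hlam
  have hderiv : deriv g q = lam ^ 2 := by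
    rw [hgdef, deriv_iter]
    have h1 : ∀ i ∈ Finset.range (2 * p),
        -(2 * (qm a)^[i] q) = -(2 * (qm a)^[m + i] 0) := by
      intro i _
      rw [horbq i]
    rw [Finset.prod_congr rfl h1]
    have h2p : 2 * p = p + p := by omega
    rw [h2p, Finset.prod_range_add]
    have h2 : ∀ i ∈ Finset.range p,
        -(2 * (qm a)^[m + (p + i)] 0) = -(2 * (qm a)^[m + i] 0) := by
      intro i _
      have : m + (p + i) = (m + i) + p := by omega
      rw [this, qm_per a hper (m + i) (by omega)]
    rw [Finset.prod_congr rfl h2]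
    ring
  have hlamne : lam ≠ 0 := by
    rw [hlam]
    apply Finset.prod_ne_zero_iff.mpr
    intro k _
    have := hne (m + k) (by omega)
    intro h0
    apply this
    have : (2:ℝ) * (qm a)^[m + k] 0 = 0 := by linarith [neg_eq_zero.mp h0]
    linarith
  have hμpos : 0 < deriv g q := by
    rw [hderiv]
    exact lt_of_le_of_ne (sq_nonneg lam) (Ne.symm (pow_ne_zero 2 hlamne))
  have hμ1 : deriv g q ≤ 1 := by
    rw [hderiv]
    have habs : |lam| = ∏ k ∈ Finset.range p, (2 * |(qm a)^[m + k] 0|) := by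
      rw [hlam, Finset.abs_prod]
      apply Finset.prod_congr rfl
      intro k _
      rw [abs_neg, abs_mul]
      norm_num
    have h0 : (0:ℝ) ≤ |lam| := abs_nonneg lam
    have h1 : |lam| ≤ 1 := by rw [habs]; exact hcon
    calc lam ^ 2 = |lam| ^ 2 := (sq_abs lam).symm
    _ ≤ 1 := by nlinarith
  -- location of q
  have hqcr := crange a ha1 ha2 m hm
  have hq2 : q < 2 := lt_of_le_of_lt hqcr.2 ha2
  have hqm2 : (-2:ℝ) < q := by
    have := hqcr.1
    nlinarith
  -- escape conditions
  have hzR : ¬(q < g 2 ∧ g 2 < 2) := by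
    rintro ⟨h1, -⟩
    have := esc_two a ha2 (2 * p) (by omega)
    rw [← hgdef] at this
    linarith
  have hzL : ¬((-3:ℝ) < g (-3) ∧ g (-3) < q) := by
    rintro ⟨h1, -⟩
    have := esc_m3 a ha2 (2 * p)
    rw [← hgdef] at this
    linarith
  -- no-critical-point facts
  have hncR : ∀ V, (∀ x, q < x → x < V → q < g x ∧ g x < x) →
      ∀ x, q < x → x < V → deriv g x ≠ 0 := by
    intro V htrap x hx1 hx2 h0
    apply no_crit a hm hp hper (Ioo q V) ?_ (⟨hx1, hx2⟩ : x ∈ Ioo q V) h0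
    intro y hy
    obtain ⟨hy1, hy2⟩ := htrap y hy.1 hy.2
    exact ⟨⟨hy1, lt_trans hy2 hy.2⟩, ne_of_lt hy2⟩
  have hncL : ∀ U, (∀ x, U < x → x < q → x < g x ∧ g x < q) →
      ∀ x, U < x → x < q → deriv g x ≠ 0 := by
    intro U htrap x hx1 hx2 h0
    apply no_crit a hm hp hper (Ioo U q) ?_ (⟨hx1, hx2⟩ : x ∈ Ioo U q) h0
    intro y hy
    obtain ⟨hy1, hy2⟩ := htrap y hy.1 hy.2
    exact ⟨⟨lt_trans hy.1 hy1, hy2⟩, Ne.symm (ne_of_lt hy1)⟩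
  -- building the right trap with fixed endpoint, from an attracting right side
  have buildR : ∀ δ, 0 < δ → (∀ x, q < x → x ≤ q + δ → q < g x ∧ g x < x) →
      ∃ V, q < V ∧ (∀ x, q < x → x < V → q < g x ∧ g x < x) ∧ g V = V := by
    intro δ hδ hat
    obtain ⟨V, hqV, htrap, hend⟩ := trap_right hgc hδ hat hq2 hzR
    refine ⟨V, hqV, htrap, ?_⟩
    rcases hend with h | h
    · exact h
    · -- g V = q : MVT gives a critical point in (q, V)
      exfalso
      obtain ⟨ζ, hζ, hζd⟩ := exists_hasDerivAt_eq_slope g (deriv g) hqV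
        (hgc.continuousOn) (fun x _ => (smooth_diff hsm x).hasDerivAt)
      rw [hgq, h] at hζd
      have : deriv g ζ = 0 := by
        rw [hζd]; simp
      exact hncR V htrap ζ hζ.1 hζ.2 this
  have buildL : ∀ δ, 0 < δ → (∀ x, q - δ ≤ x → x < q → x < g x ∧ g x < q) →
      ∃ U, U < q ∧ (∀ x, U < x → x < q → x < g x ∧ g x < q) ∧ g U = U := by
    intro δ hδ hat
    obtain ⟨U, hUq, htrap, hend⟩ := trap_left hgc hδ hat (by linarith : (-3:ℝ) < q) hzL
    refine ⟨U, hUq, htrap, ?_⟩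
    rcases hend with h | h
    · exact h
    · exfalso
      obtain ⟨ζ, hζ, hζd⟩ := exists_hasDerivAt_eq_slope g (deriv g) hUq
        (hgc.continuousOn) (fun x _ => (smooth_diff hsm x).hasDerivAt)
      rw [hgq, h] at hζd
      have : deriv g ζ = 0 := by
        rw [hζd]; simp
      exact hncL U htrap ζ hζ.1 hζ.2 this
  -- the function φ = g - id
  set φ : ℝ → ℝ := fun x => g x - x with hφdef
  have hφsm : ContDiff ℝ ∞ φ := hsm.sub contDiff_id
  have hdφ : deriv φ = fun x => deriv g x - 1 := deriv_sub_id g hsm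
  have hd2φ : deriv (deriv φ) = deriv (deriv g) := by
    rw [hdφ]
    funext x
    rw [show (fun x => deriv g x - 1) = fun x => (deriv g) x - (fun _ => (1:ℝ)) x from rfl]
    rw [deriv_fun_sub (smooth_diff (smooth_deriv hsm) x) (differentiableAt_const 1)]
    simp
  have hd3φ : deriv (deriv (deriv φ)) = deriv (deriv (deriv g)) := by rw [hd2φ]
  have hφq : φ q = 0 := by rw [hφdef]; simp [hgq]
  -- positivity side facts from sign_first_pos on g
  obtain ⟨δ₀, hδ₀, hgR, hgL⟩ := sign_first_pos hsm hμpos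
  rw [hgq] at hgR hgL
  -- main case analysis
  rcases eq_or_lt_of_le hμ1 with hμeq | hμlt
  · -- neutral case μ = 1
    have hdq1 : deriv g q = 1 := hμeq.symm ▸ rfl
    have hdφq : deriv φ q = 0 := by rw [hdφ]; simp [hdq1]
    rcases lt_trichotomy (deriv (deriv g) q) 0 with hb | hb | hb
    · -- b < 0 : right side attracting
      obtain ⟨δ₁, hδ₁, hr1, -⟩ := sign_second_max hφsm hdφq (by rw [hd2φ]; exact hb)
      rw [hφq] at hr1
      have hat : ∀ x, q < x → x ≤ q + min δ₀ δ₁ → q < g x ∧ g x < x := by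
        intro x h1 h2
        constructor
        · exact hgR x h1 (le_trans h2 (by simp [min_le_left]))
        · have := hr1 x h1 (le_trans h2 (by simp [min_le_right]))
          rw [hφdef] at this
          simp only at this
          linarith
      obtain ⟨V, hqV, htrap, hgV⟩ := buildR _ (lt_min hδ₀ hδ₁) hat
      exact finish_right a hp hqV htrap hgq hgV hdq1 (hncR V htrap)
    · -- b = 0 : third derivative negative, right side attracting
      have h3 : deriv (deriv (deriv g)) q < 0 :=
        key_third_deriv a (by omega : 1 ≤ 2 * p) (by rw [← hgdef]; exact hμpos)
          (by rw [← hgdef]; exact hb)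
      obtain ⟨δ₁, hδ₁, hr1, -⟩ := sign_third_decr hφsm hdφq (by rw [hd2φ]; exact hb)
        (by rw [hd3φ]; exact h3)
      rw [hφq] at hr1
      have hat : ∀ x, q < x → x ≤ q + min δ₀ δ₁ → q < g x ∧ g x < x := by
        intro x h1 h2
        constructor
        · exact hgR x h1 (le_trans h2 (by simp [min_le_left]))
        · have := hr1 x h1 (le_trans h2 (by simp [min_le_right]))
          rw [hφdef] at this
          simp only at this
          linarith
      obtain ⟨V, hqV, htrap, hgV⟩ := buildR _ (lt_min hδ₀ hδ₁) hat
      exact finish_right a hp hqV htrap hgq hgV hdq1 (hncR V htrap)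
    · -- b > 0 : left side attracting
      obtain ⟨δ₁, hδ₁, -, hl1⟩ := sign_second_min hφsm hdφq (by rw [hd2φ]; exact hb)
      rw [hφq] at hl1
      have hat : ∀ x, q - min δ₀ δ₁ ≤ x → x < q → x < g x ∧ g x < q := by
        intro x h1 h2
        constructor
        · have := hl1 x (le_trans (by simp [min_le_right]; linarith [min_le_right δ₀ δ₁]) h1) h2
          rw [hφdef] at this
          simp only at this
          linarith
        · exact hgL x (le_trans (by linarith [min_le_left δ₀ δ₁]) h1) h2
      obtain ⟨U, hUq, htrap, hgU⟩ := buildL _ (lt_min hδ₀ hδ₁) hat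
      exact finish_left a hp hUq htrap hgq hgU hdq1 (hncL U htrap)
  · -- contracting case μ < 1
    have hdφq : deriv φ q < 0 := by rw [hdφ]; simp only; linarith
    obtain ⟨δ₁, hδ₁, hr1, hl1⟩ := sign_first_neg hφsm hdφq
    rw [hφq] at hr1 hl1
    have hatR : ∀ x, q < x → x ≤ q + min δ₀ δ₁ → q < g x ∧ g x < x := by
      intro x h1 h2
      constructor
      · exact hgR x h1 (le_trans h2 (by linarith [min_le_left δ₀ δ₁]))
      · have := hr1 x h1 (le_trans h2 (by linarith [min_le_right δ₀ δ₁]))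
        rw [hφdef] at this
        simp only at this
        linarith
    have hatL : ∀ x, q - min δ₀ δ₁ ≤ x → x < q → x < g x ∧ g x < q := by
      intro x h1 h2
      constructor
      · have := hl1 x (le_trans (by linarith [min_le_right δ₀ δ₁]) h1) h2
        rw [hφdef] at this
        simp only at this
        linarith
      · exact hgL x (le_trans (by linarith [min_le_left δ₀ δ₁]) h1) h2
    obtain ⟨V, hqV, htrapR, hgV⟩ := buildR _ (lt_min hδ₀ hδ₁) hatR
    obtain ⟨U, hUq, htrapL, hgU⟩ := buildL _ (lt_min hδ₀ hδ₁) hatL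
    apply finish_two a hp hUq hqV hgU hgq hgV hμlt hμpos
    intro x hx
    rcases hx with ⟨h1, h2⟩ | ⟨h1, h2⟩
    · exact hncL U htrapL x h1 h2
    · exact hncR V htrapR x h1 h2

section Dn
variable (a : ℝ)

/-- `D n = ∏_{i=1}^n 2|c_i|`. -/
def Dd (n : ℕ) : ℝ := ∏ i ∈ Finset.range n, (2 * |(qm a)^[i + 1] 0|)

variable {a}

lemma Dd_pos (hne : ∀ i, 1 ≤ i → (qm a)^[i] 0 ≠ 0) (n : ℕ) : 0 < Dd a n := by
  apply Finset.prod_pos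
  intro i _
  have := hne (i + 1) (by omega)
  positivity

lemma Dd_succ (n : ℕ) : Dd a (n + 1) = Dd a n * (2 * |(qm a)^[n + 1] 0|) :=
  Finset.prod_range_succ _ n

/-- the product of `2|c|` over any window of length `p` starting at `s ≥ m` equals `Λ`. -/
lemma window_prod {m p : ℕ} (hm : 1 ≤ m) (hp : 1 ≤ p)
    (hper : (qm a)^[m + p] 0 = (qm a)^[m] 0)
    (hne : ∀ i, 1 ≤ i → (qm a)^[i] 0 ≠ 0) :
    ∀ s, m ≤ s → ∏ k ∈ Finset.range p, (2 * |(qm a)^[s + k] 0|)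
      = ∏ k ∈ Finset.range p, (2 * |(qm a)^[m + k] 0|) := by
  intro s hs
  induction s with
  | zero => omega
  | succ s ih =>
    rcases Nat.eq_or_lt_of_le hs with h1 | h1
    · rw [← h1]
    · have hsm : m ≤ s := by omega
      have key : (2 * |(qm a)^[s] 0|) * ∏ k ∈ Finset.range p, (2 * |(qm a)^[s + 1 + k] 0|)
          = (∏ k ∈ Finset.range p, (2 * |(qm a)^[s + k] 0|)) * (2 * |(qm a)^[s + p] 0|) := by
        have e1 : ∏ k ∈ Finset.range (p + 1), (2 * |(qm a)^[s + k] 0|)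
            = (∏ k ∈ Finset.range p, (2 * |(qm a)^[s + k] 0|)) * (2 * |(qm a)^[s + p] 0|) :=
          Finset.prod_range_succ _ p
        have e2 : ∏ k ∈ Finset.range (p + 1), (2 * |(qm a)^[s + k] 0|)
            = (∏ k ∈ Finset.range p, (2 * |(qm a)^[s + (k + 1)] 0|)) * (2 * |(qm a)^[s + 0] 0|) :=
          Finset.prod_range_succ' _ p
        have e3 : ∀ k ∈ Finset.range p, (2 * |(qm a)^[s + (k + 1)] 0|)
            = (2 * |(qm a)^[s + 1 + k] 0|) := by
          intro k _
          have : s + (k + 1) = s + 1 + k := by omega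
          rw [this]
        rw [Finset.prod_congr rfl e3] at e2
        rw [← e1, e2]
        simp [mul_comm]
      have hper' : (qm a)^[s + p] 0 = (qm a)^[s] 0 := qm_per a hper s hsm
      rw [hper'] at key
      have hs0 : (2 * |(qm a)^[s] 0|) ≠ 0 := by
        have := hne s (by omega)
        positivity
      have := mul_left_cancel₀ hs0 (key.trans (mul_comm _ _))
      rw [this]
      exact ih hsm

lemma Dd_mul_window {m p : ℕ} (hm : 1 ≤ m) (hp : 1 ≤ p)
    (hper : (qm a)^[m + p] 0 = (qm a)^[m] 0)
    (hne : ∀ i, 1 ≤ i → (qm a)^[i] 0 ≠ 0) :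
    ∀ n, m ≤ n + 1 → Dd a (n + p)
      = Dd a n * ∏ k ∈ Finset.range p, (2 * |(qm a)^[m + k] 0|) := by
  intro n hn
  unfold Dd
  rw [Finset.prod_range_add]
  congr 1
  have e : ∀ k ∈ Finset.range p, (2 * |(qm a)^[n + k + 1] 0|)
      = (2 * |(qm a)^[(n + 1) + k] 0|) := by
    intro k _
    have : n + k + 1 = (n + 1) + k := by omega
    rw [this]
  rw [Finset.prod_congr rfl e]
  exact window_prod hm hp hper hne (n + 1) hn

lemma Dd_pow {m p : ℕ} (hm : 1 ≤ m) (hp : 1 ≤ p)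
    (hper : (qm a)^[m + p] 0 = (qm a)^[m] 0)
    (hne : ∀ i, 1 ≤ i → (qm a)^[i] 0 ≠ 0) (r : ℕ) (hr : m ≤ r) :
    ∀ j, Dd a (r + j * p)
      = Dd a r * (∏ k ∈ Finset.range p, (2 * |(qm a)^[m + k] 0|)) ^ j := by
  intro j
  induction j with
  | zero => simp
  | succ j ih =>
    have : r + (j + 1) * p = (r + j * p) + p := by ring
    rw [this, Dd_mul_window hm hp hper hne (r + j * p) (by omega), ih]
    ring

/-- uniform bound for the partial sums of `1 / D n`. -/
lemma Dd_inv_sum_bound {m p : ℕ} (hm : 1 ≤ m) (hp : 1 ≤ p)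
    (hper : (qm a)^[m + p] 0 = (qm a)^[m] 0)
    (hne : ∀ i, 1 ≤ i → (qm a)^[i] 0 ≠ 0)
    (hΛ : 1 < ∏ k ∈ Finset.range p, (2 * |(qm a)^[m + k] 0|)) :
    ∃ S : ℝ, 0 ≤ S ∧ ∀ n : ℕ, ∑ k ∈ Finset.range n, (Dd a (k + 1))⁻¹ ≤ S := by
  set Λ := ∏ k ∈ Finset.range p, (2 * |(qm a)^[m + k] 0|) with hΛdef
  set x := Λ⁻¹ with hx
  have hΛpos : 0 < Λ := by positivity
  have hx0 : 0 < x := by rw [hx]; positivity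
  have hx1 : x < 1 := by
    rw [hx]
    rw [inv_lt_one_iff₀]
    right; exact hΛ
  set B0 : ℝ := ∑ k ∈ Finset.range m, (Dd a (k + 1))⁻¹ with hB0
  set B1 : ℝ := ∑ r ∈ Finset.range p, (Dd a (m + r + 1))⁻¹ with hB1
  have hB0nn : 0 ≤ B0 := Finset.sum_nonneg fun k _ => by
    have := Dd_pos hne (k + 1); positivity
  have hB1nn : 0 ≤ B1 := Finset.sum_nonneg fun k _ => by
    have := Dd_pos hne (m + k + 1); positivity
  have h1x : (0:ℝ) < 1 - x := by linarith
  refine ⟨B0 + B1 * (1 / (1 - x)),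
    add_nonneg hB0nn (mul_nonneg hB1nn (div_nonneg zero_le_one h1x.le)), ?_⟩
  intro n
  -- first, monotonicity: range n ⊆ range (m + n * p)
  have hmono : ∑ k ∈ Finset.range n, (Dd a (k + 1))⁻¹
      ≤ ∑ k ∈ Finset.range (m + n * p), (Dd a (k + 1))⁻¹ := by
    apply Finset.sum_le_sum_of_subset_of_nonneg
    · apply Finset.range_subset_range.mpr
      have : n ≤ n * p := Nat.le_mul_of_pos_right n (by omega)
      omega
    · intro k _ _
      have := Dd_pos hne (k + 1); positivity
  refine le_trans hmono ?_
  -- block decomposition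
  have hblock : ∀ j : ℕ, ∑ k ∈ Finset.range (m + j * p), (Dd a (k + 1))⁻¹
      = B0 + B1 * ∑ i ∈ Finset.range j, x ^ i := by
    intro j
    induction j with
    | zero => simp [hB0]
    | succ j ih =>
      have h1 : m + (j + 1) * p = (m + j * p) + p := by ring
      rw [h1, Finset.sum_range_add, ih, Finset.sum_range_succ]
      have h2 : ∀ r ∈ Finset.range p, (Dd a (m + j * p + r + 1))⁻¹
          = (Dd a (m + r + 1))⁻¹ * x ^ j := by
        intro r _
        have h3 : m + j * p + r + 1 = (m + r + 1) + j * p := by omega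
        rw [h3, Dd_pow hm hp hper hne (m + r + 1) (by omega) j]
        rw [mul_inv]
        congr 1
        rw [hx, ← inv_pow]
      rw [Finset.sum_congr rfl h2, ← Finset.sum_mul]
      rw [← hB1]
      ring
  rw [hblock n]
  have hgeom : ∑ i ∈ Finset.range n, x ^ i ≤ 1 / (1 - x) := by
    have hmul := geom_sum_mul x n
    have h1x : 0 < 1 - x := by linarith
    rw [div_eq_inv_mul, ← sub_nonneg]
    have hxn : 0 ≤ x ^ n := by positivity
    have : (∑ i ∈ Finset.range n, x ^ i) * (x - 1) = x ^ n - 1 := hmul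
    have h2 : (∑ i ∈ Finset.range n, x ^ i) = (1 - x ^ n) / (1 - x) := by
      field_simp
      nlinarith [this]
    rw [h2]
    rw [inv_mul_eq_div, ← sub_div]
    apply div_nonneg _ (le_of_lt h1x)
    linarith
  nlinarith [hB1nn, hgeom]
end Dn

lemma qm_cont (a : ℝ) : Continuous (qm a) := by unfold qm; fun_prop

lemma IEnd_le (a α : ℝ) (hα : 0 < α) :
    ∀ n, (IEnd a α n).1 ≤ (IEnd a α n).2 ∧ 2 * α ≤ len a α n := by
  intro n
  induction n with
  | zero =>
    constructor
    · simp [IEnd]; linarith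
    · simp [len, IEnd]; linarith
  | succ n ih =>
    have hne : (qm a '' Icc (IEnd a α n).1 (IEnd a α n).2).Nonempty :=
      (nonempty_Icc.mpr ih.1).image _
    have hcomp : IsCompact (qm a '' Icc (IEnd a α n).1 (IEnd a α n).2) :=
      (isCompact_Icc).image (qm_cont a)
    have hIS : sInf (qm a '' Icc (IEnd a α n).1 (IEnd a α n).2)
        ≤ sSup (qm a '' Icc (IEnd a α n).1 (IEnd a α n).2) :=
      csInf_le_csSup hne hcomp.bddBelow hcomp.bddAbove
    constructor
    · simp only [IEnd]; linarith
    · simp only [len, IEnd]; linarith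

lemma c_mem (a α : ℝ) (hα : 0 < α) :
    ∀ n, (IEnd a α n).1 ≤ (qm a)^[n + 1] 0 ∧ (qm a)^[n + 1] 0 ≤ (IEnd a α n).2 := by
  intro n
  induction n with
  | zero =>
    simp [IEnd]
    linarith
  | succ n ih =>
    have hmem : (qm a)^[n + 2] 0 ∈ qm a '' Icc (IEnd a α n).1 (IEnd a α n).2 := by
      refine ⟨(qm a)^[n + 1] 0, ⟨ih.1, ih.2⟩, ?_⟩
      rw [← Function.iterate_succ_apply' (qm a) (n + 1) 0]
    have hcomp : IsCompact (qm a '' Icc (IEnd a α n).1 (IEnd a α n).2) :=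
      (isCompact_Icc).image (qm_cont a)
    constructor
    · simp only [IEnd]
      have := csInf_le hcomp.bddBelow hmem
      linarith
    · simp only [IEnd]
      have := le_csSup hcomp.bddAbove hmem
      linarith

lemma len_step (a α ξ₀ : ℝ) (hα : 0 < α) (hξ₀ : 0 < ξ₀) (n : ℕ)
    (hc : 2 * ξ₀ ≤ |(qm a)^[n + 1] 0|)
    (hlen : len a α n < ξ₀) :
    ∃ u, 2 * |(qm a)^[n + 1] 0| - 2 * len a α n ≤ u ∧
         u ≤ 2 * |(qm a)^[n + 1] 0| + 2 * len a α n ∧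
         len a α (n + 1) = u * len a α n + 2 * α := by
  obtain ⟨h12, h2α⟩ := IEnd_le a α hα n
  obtain ⟨hce1, hce2⟩ := c_mem a α hα n
  set e1 := (IEnd a α n).1 with he1
  set e2 := (IEnd a α n).2 with he2
  set c := (qm a)^[n + 1] 0 with hcdef
  set L := len a α n with hL
  have hLe : L = e2 - e1 := rfl
  have hL0 : 0 < L := by linarith
  have hcomp : IsCompact (qm a '' Icc e1 e2) := (isCompact_Icc).image (qm_cont a)
  have hlen1 : len a α (n + 1)
      = sSup (qm a '' Icc e1 e2) - sInf (qm a '' Icc e1 e2) + 2 * α := by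
    simp only [len, IEnd, ← he1, ← he2]
    ring
  rcases le_or_gt 0 c with hcpos | hcneg
  · -- positive branch
    have habs : |c| = c := abs_of_nonneg hcpos
    rw [habs] at hc
    have he1pos : ξ₀ < e1 := by linarith
    have hgr : IsGreatest (qm a '' Icc e1 e2) (qm a e1) := by
      constructor
      · exact ⟨e1, ⟨le_refl _, h12⟩, rfl⟩
      · rintro y ⟨x, hx, rfl⟩
        simp only [qm]
        nlinarith [hx.1, hx.2]
    have hls : IsLeast (qm a '' Icc e1 e2) (qm a e2) := by
      constructor
      · exact ⟨e2, ⟨h12, le_refl _⟩, rfl⟩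
      · rintro y ⟨x, hx, rfl⟩
        simp only [qm]
        nlinarith [hx.1, hx.2]
    refine ⟨e1 + e2, by linarith, by linarith, ?_⟩
    rw [hlen1, hgr.csSup_eq, hls.csInf_eq]
    simp only [qm]
    rw [hLe]
    ring
  · -- negative branch
    have habs : |c| = -c := abs_of_neg hcneg
    rw [habs] at hc
    have he2neg : e2 < -ξ₀ := by linarith
    have hgr : IsGreatest (qm a '' Icc e1 e2) (qm a e2) := by
      constructor
      · exact ⟨e2, ⟨h12, le_refl _⟩, rfl⟩
      · rintro y ⟨x, hx, rfl⟩
        simp only [qm]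
        nlinarith [hx.1, hx.2]
    have hls : IsLeast (qm a '' Icc e1 e2) (qm a e1) := by
      constructor
      · exact ⟨e1, ⟨le_refl _, h12⟩, rfl⟩
      · rintro y ⟨x, hx, rfl⟩
        simp only [qm]
        nlinarith [hx.1, hx.2]
    refine ⟨-(e1 + e2), by linarith, by linarith, ?_⟩
    rw [hlen1, hgr.csSup_eq, hls.csInf_eq]
    simp only [qm]
    rw [hLe]
    ring

end ShadowAux

/-- There is `C ≥ 1`, depending only on `f` and `ξ₀`, such that for every
`α ∈ (0, ξ₀]` and every `0 ≤ n ≤ N(α)`: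
`C⁻¹ |(f^n)'(c₁)| α ≤ |I_{n+1}| ≤ C |(f^n)'(c₁)| α`. -/
theorem shadowing_interval_length
    (a : ℝ) (ha : a ∈ Set.Ioo (1 : ℝ) 2) (hpre : StrictlyPreperiodic a)
    (ξ₀ : ℝ) (hξ₀ : 0 < ξ₀)
    (hcrit : ∀ i : ℕ, 1 ≤ i → (qm a)^[i] 0 ∉ Set.Ioo (-(2 * ξ₀)) (2 * ξ₀))
    :
    ∃ C : ℝ, 1 ≤ C ∧ ∀ α : ℝ, 0 < α → α ≤ ξ₀ → ∀ n : ℕ, n ≤ Nal a ξ₀ α →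
      C⁻¹ * (|deriv ((qm a)^[n]) (qm a 0)| * α) ≤ len a α n ∧
      len a α n ≤ C * (|deriv ((qm a)^[n]) (qm a 0)| * α) := by

  obtain ⟨hne, m, p, hm, hp, hper⟩ := hpre
  obtain ⟨ha1, ha2⟩ := ha
  have hΛ := cycle_repelling a ha1 ha2 hne hm hp hper
  obtain ⟨S, hS0, hSb⟩ := Dd_inv_sum_bound hm hp hper hne hΛ
  refine ⟨8 + 4 * S, by linarith, ?_⟩
  intro α hα hαξ n hnN
  -- |deriv (f^[n])| at c₁ equals Dd a n
  have hDd : ∀ k : ℕ, |deriv ((qm a)^[k]) (qm a 0)| = Dd a k := by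
    intro k
    rw [deriv_iter a k (qm a 0), Finset.abs_prod]
    apply Finset.prod_congr rfl
    intro i _
    have h1 : (qm a)^[i] (qm a 0) = (qm a)^[i + 1] 0 := by
      rw [← Function.iterate_succ_apply]
    rw [h1, abs_neg, abs_mul]
    norm_num
  -- |c i| ≥ 2 ξ₀
  have hcv : ∀ i, 1 ≤ i → 2 * ξ₀ ≤ |(qm a)^[i] 0| := by
    intro i hi
    by_contra hlt
    push_neg at hlt
    exact hcrit i hi (by rw [mem_Ioo]; exact ⟨(abs_lt.mp hlt).1, (abs_lt.mp hlt).2⟩)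
  -- the Nal membership facts
  set Ns := {N : ℕ | (∀ n : ℕ, 1 ≤ n → n ≤ N → len a α (n - 1) < ξ₀) ∧
    ∑ n ∈ Finset.range N, len a α n ≤ ξ₀} with hNs
  have h0 : 0 ∈ Ns := by
    constructor
    · intro n h1 h2; omega
    · simpa using hξ₀.le
  have hbdd : BddAbove Ns := by
    use Nat.ceil (ξ₀ / (2 * α))
    intro N hN
    have hge : (N : ℝ) * (2 * α) ≤ ∑ k ∈ Finset.range N, len a α k := by
      calc (N : ℝ) * (2 * α) = ∑ _k ∈ Finset.range N, (2 * α) := by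
            rw [Finset.sum_const, Finset.card_range]; ring
      _ ≤ _ := Finset.sum_le_sum (fun k _ => (IEnd_le a α hα k).2)
    have hNle : (N : ℝ) ≤ ξ₀ / (2 * α) := by
      rw [le_div_iff₀ (by positivity)]
      linarith [hN.2]
    have := hNle.trans (Nat.le_ceil _)
    exact_mod_cast this
  have hNmem : Nal a ξ₀ α ∈ Ns := Nat.sSup_mem ⟨0, h0⟩ hbdd
  obtain ⟨hN1, hN2⟩ := hNmem
  set N := Nal a ξ₀ α with hNdef
  have hlt : ∀ k, k < N → len a α k < ξ₀ := by
    intro k hk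
    have := hN1 (k + 1) (by omega) (by omega)
    simpa using this
  have hlen_nonneg : ∀ k, 0 ≤ len a α k := by
    intro k
    have := (IEnd_le a α hα k).2
    linarith
  have hsum_le : ∀ k, k ≤ N → ∑ i ∈ Finset.range k, len a α i ≤ ξ₀ := by
    intro k hk
    refine le_trans ?_ hN2
    apply Finset.sum_le_sum_of_subset_of_nonneg (Finset.range_subset_range.mpr hk)
    intro i _ _
    exact hlen_nonneg i
  -- the main induction
  have main : ∀ k, k ≤ N →
      (8 * ξ₀ - 4 * ∑ i ∈ Finset.range k, len a α i) * Dd a k * α ≤ 2 * ξ₀ * len a α k ∧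
      ξ₀ * len a α k ≤ (4 + 2 * ∑ i ∈ Finset.range k, (Dd a (i + 1))⁻¹)
        * ((ξ₀ + ∑ i ∈ Finset.range k, len a α i) * (Dd a k * α)) := by
    intro k
    induction k with
    | zero =>
      intro _
      have hlen0 : len a α 0 = 4 * α := by
        simp [len, IEnd]
        ring
      have hD0 : Dd a 0 = 1 := by simp [Dd]
      rw [hlen0, hD0]
      simp
      constructor
      · nlinarith
      · nlinarith
    | succ k ih =>
      intro hk1
      obtain ⟨ihL, ihU⟩ := ih (by omega)
      have hlk : len a α k < ξ₀ := hlt k (by omega)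
      have hSl1 : ∑ i ∈ Finset.range (k + 1), len a α i ≤ ξ₀ := hsum_le (k + 1) hk1
      have hc := hcv (k + 1) (by omega)
      obtain ⟨u, hu1, hu2, hu3⟩ := len_step a α ξ₀ hα hξ₀ k hc hlk
      set L := len a α k with hLdef
      set c' := |(qm a)^[k + 1] 0| with hc'def
      set Sl := ∑ i ∈ Finset.range k, len a α i with hSldef
      set T := ∑ i ∈ Finset.range k, (Dd a (i + 1))⁻¹ with hTdef
      have hsum_succ : ∑ i ∈ Finset.range (k + 1), len a α i = Sl + L :=
        Finset.sum_range_succ _ k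
      have hT_succ : ∑ i ∈ Finset.range (k + 1), (Dd a (i + 1))⁻¹ = T + (Dd a (k + 1))⁻¹ :=
        Finset.sum_range_succ _ k
      have hDpos : 0 < Dd a k := Dd_pos hne k
      have hD1pos : 0 < Dd a (k + 1) := Dd_pos hne (k + 1)
      have hDsucc : Dd a (k + 1) = Dd a k * (2 * c') := Dd_succ k
      have hL2α : 2 * α ≤ L := (IEnd_le a α hα k).2
      have hL0 : 0 < L := by linarith
      have hSl0 : 0 ≤ Sl := Finset.sum_nonneg fun i _ => hlen_nonneg i
      have hSlL : Sl + L ≤ ξ₀ := by rw [← hsum_succ]; exact hSl1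
      have hT0 : 0 ≤ T := Finset.sum_nonneg fun i _ => by
        have := Dd_pos hne (i + 1); positivity
      rw [hsum_succ, hT_succ, hu3]
      constructor
      · -- lower bound
        rw [hDsucc]
        have s1 : (0:ℝ) ≤ 2 * c' - 2 * L := by linarith
        have h₁ : (2 * c' - 2 * L) * ((8 * ξ₀ - 4 * Sl) * Dd a k * α)
            ≤ (2 * c' - 2 * L) * (2 * ξ₀ * L) := mul_le_mul_of_nonneg_left ihL s1
        have h₂ : (2 * c' - 2 * L) * L ≤ u * L := mul_le_mul_of_nonneg_right hu1 hL0.le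
        have m1 : (0:ℝ) ≤ (c' - 2 * ξ₀) * L * (Dd a k * α) := by
          apply mul_nonneg (mul_nonneg (by linarith) hL0.le)
          positivity
        have m2 : (0:ℝ) ≤ Sl * L * (Dd a k * α) := by
          apply mul_nonneg (mul_nonneg hSl0 hL0.le)
          positivity
        nlinarith [h₁, h₂, m1, m2, mul_pos hξ₀ hα]
      · -- upper bound
        have hD1ne : Dd a (k + 1) ≠ 0 := ne_of_gt hD1pos
        have hinv : (Dd a (k + 1))⁻¹ * Dd a (k + 1) = 1 := inv_mul_cancel₀ hD1ne
        have s2 : (0:ℝ) ≤ 2 * c' + 2 * L := by linarith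
        have h₁ : (2 * c' + 2 * L) * (ξ₀ * L)
            ≤ (2 * c' + 2 * L) * ((4 + 2 * T) * ((ξ₀ + Sl) * (Dd a k * α))) :=
          mul_le_mul_of_nonneg_left ihU s2
        have h₂ : ξ₀ * (u * L) ≤ ξ₀ * ((2 * c' + 2 * L) * L) := by
          apply mul_le_mul_of_nonneg_left _ hξ₀.le
          exact mul_le_mul_of_nonneg_right hu2 hL0.le
        have gap : (0:ℝ) ≤ (4 + 2 * T) * (Dd a k * α) * (2 * L) * (c' - ξ₀ - Sl) := by
          have f1 : (0:ℝ) ≤ 4 + 2 * T := by linarith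
          have f2 : (0:ℝ) ≤ Dd a k * α := by positivity
          have f3 : (0:ℝ) ≤ 2 * L := by linarith
          have f4 : (0:ℝ) ≤ c' - ξ₀ - Sl := by linarith
          exact mul_nonneg (mul_nonneg (mul_nonneg f1 f2) f3) f4
        have hia : (Dd a (k + 1))⁻¹ * (Dd a (k + 1) * α) = α := by
          rw [← mul_assoc, hinv, one_mul]
        have hexp : (4 + 2 * (T + (Dd a (k + 1))⁻¹)) * ((ξ₀ + (Sl + L)) * (Dd a (k + 1) * α))
            = (4 + 2 * T) * ((ξ₀ + Sl + L) * (Dd a (k + 1) * α)) + 2 * (ξ₀ + Sl + L) * α := by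
          have e1 : (4 + 2 * (T + (Dd a (k + 1))⁻¹)) * ((ξ₀ + (Sl + L)) * (Dd a (k + 1) * α))
              = (4 + 2 * T) * ((ξ₀ + Sl + L) * (Dd a (k + 1) * α))
                + 2 * ((Dd a (k + 1))⁻¹ * (Dd a (k + 1) * α)) * (ξ₀ + Sl + L) := by ring
          rw [e1, hia]
          ring
        rw [hexp, hDsucc]
        nlinarith [h₁, h₂, gap]
  -- conclusion
  obtain ⟨mainL, mainU⟩ := main n hnN
  have hSl_le : ∑ i ∈ Finset.range n, len a α i ≤ ξ₀ := hsum_le n hnN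
  have hSl0 : 0 ≤ ∑ i ∈ Finset.range n, len a α i :=
    Finset.sum_nonneg fun i _ => hlen_nonneg i
  have hT_le : ∑ i ∈ Finset.range n, (Dd a (i + 1))⁻¹ ≤ S := hSb n
  have hT0 : 0 ≤ ∑ i ∈ Finset.range n, (Dd a (i + 1))⁻¹ :=
    Finset.sum_nonneg fun i _ => by have := Dd_pos hne (i + 1); positivity
  have hDpos : 0 < Dd a n := Dd_pos hne n
  rw [hDd n]
  constructor
  · -- lower
    have h2 : 2 * (Dd a n * α) ≤ len a α n := by
      nlinarith [mainL, mul_pos hDpos hα]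
    have hCinv : (8 + 4 * S)⁻¹ ≤ 1 := by
      rw [inv_le_one_iff₀]
      right; linarith
    have hX0 : (0:ℝ) ≤ Dd a n * α := by positivity
    have : (8 + 4 * S)⁻¹ * (Dd a n * α) ≤ 1 * (Dd a n * α) := by
      apply mul_le_mul_of_nonneg_right hCinv
      positivity
    linarith
  · -- upper
    set X := Dd a n * α with hXdef
    set T' := ∑ i ∈ Finset.range n, (Dd a (i + 1))⁻¹
    set Sl' := ∑ i ∈ Finset.range n, len a α i
    have hX0 : (0:ℝ) ≤ X := by positivity
    have e1 : (4 + 2 * T') * ((ξ₀ + Sl') * X) ≤ (4 + 2 * S) * ((ξ₀ + Sl') * X) := by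
      apply mul_le_mul_of_nonneg_right (by linarith)
      apply mul_nonneg (by linarith) hX0
    have e2 : (4 + 2 * S) * ((ξ₀ + Sl') * X) ≤ (4 + 2 * S) * ((2 * ξ₀) * X) := by
      apply mul_le_mul_of_nonneg_left _ (by linarith)
      exact mul_le_mul_of_nonneg_right (by linarith) hX0
    nlinarith [mainU, e1, e2]
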